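/- Let (X,μ) be a nonatomic probability space, T a tree on X, q ∈ (0,1), and φ a T-good function with ∫_X φ dμ = f. Let A = {I_j}_j be any pairwise disjoint family of elements of S_φ (not necessarily maximal). Then for every β > 0, ∫_{X \ ∪_j I_j} (M_T φ)^q dμ ≤ (1/((1−q)β)) · [ (β+1)( f^q − Σ_j μ(I_j)·y_{I_j}^q ) − (β+1)^q ∫_{X \ ∪_j I_j} φ^q dμ ], where y_{I_j} = Av_{I_j}(φ). -/

import Mathlib

open MeasureTheory Filter Set
open scoped ENNReal NNReal

noncomputable section

structure DTree (X : Type*) [MeasurableSpace X] (μ : Measure X) where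
  mem : Set (Set X)
  child : Set X → Set (Set X)
  meas : ∀ I ∈ mem, MeasurableSet I
  top_mem : Set.univ ∈ mem
  pos : ∀ I ∈ mem, 0 < μ I
  child_sub_mem : ∀ I ∈ mem, child I ⊆ mem
  child_countable : ∀ I ∈ mem, (child I).Countable
  child_two : ∀ I ∈ mem, ∃ J ∈ child I, ∃ K ∈ child I, J ≠ K
  child_sub : ∀ I ∈ mem, ∀ J ∈ child I, J ⊆ I
  child_disj : ∀ I ∈ mem, (child I).Pairwise Disjoint
  child_union : ∀ I ∈ mem, ⋃₀ child I = I
  generated : ∃ lvl : ℕ → Set (Set X),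
    lvl 0 = {Set.univ} ∧
    (∀ m, lvl (m + 1) = ⋃ I ∈ lvl m, child I) ∧
    mem = ⋃ m, lvl m ∧
    Tendsto (fun m => ⨆ I ∈ lvl m, μ I) atTop (nhds 0)

variable {X : Type*} [MeasurableSpace X]

/-- The average of `φ` over `I`. -/
def trAvg (μ : Measure X) (φ : X → ℝ) (I : Set X) : ℝ :=
  (μ I).toReal⁻¹ * ∫ x in I, φ x ∂μ

/-- The dyadic maximal operator associated with the tree `T`. -/
def trMax (μ : Measure X) (T : DTree X μ) (φ : X → ℝ) (x : X) : ℝ :=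
  sSup {r : ℝ | ∃ I ∈ T.mem, x ∈ I ∧ r = trAvg μ (fun y => |φ y|) I}

/-- The exceptional set `A_φ`. -/
def trBad (μ : Measure X) (T : DTree X μ) (φ : X → ℝ) : Set X :=
  {x | ∀ I ∈ T.mem, x ∈ I → trAvg μ φ I < trMax μ T φ x}

/-- `φ` is `T`-good if the exceptional set `A_φ` is null. -/
def TGood (μ : Measure X) (T : DTree X μ) (φ : X → ℝ) : Prop :=
  μ (trBad μ T φ) = 0

/-- The set `A(φ, I) = {x ∈ X \ A_φ : I_φ(x) = I}`, where `I_φ(x)` is the largest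
element `I` of the tree with `x ∈ I` and `M_T φ x = Av_I(φ)`. -/
def trA (μ : Measure X) (T : DTree X μ) (φ : X → ℝ) (I : Set X) : Set X :=
  {x | x ∉ trBad μ T φ ∧ I ∈ T.mem ∧ x ∈ I ∧ trMax μ T φ x = trAvg μ φ I ∧
    ∀ J ∈ T.mem, x ∈ J → trMax μ T φ x = trAvg μ φ J → J ⊆ I}

/-- The subtree `S_φ`. -/
def trS (μ : Measure X) (T : DTree X μ) (φ : X → ℝ) : Set (Set X) :=
  {I | I ∈ T.mem ∧ 0 < μ (trA μ T φ I)} ∪ {Set.univ}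

/-- `J* = I` : `I` is the smallest element of `S_φ` properly containing `J`. -/
def IsStarOf (μ : Measure X) (T : DTree X μ) (φ : X → ℝ) (J I : Set X) : Prop :=
  I ∈ trS μ T φ ∧ J ⊂ I ∧ ∀ K ∈ trS μ T φ, J ⊂ K → I ⊆ K

/-- `H_q(z) = (1-q) z^q + q z^(q-1)`. -/
def funH (q z : ℝ) : ℝ := (1 - q) * z ^ q + q * z ^ (q - 1)

/-- `ω_q(z) = (H_q⁻¹(z))^q`, with `H_q⁻¹` the inverse of `H_q : [1,∞) → [1,∞)`. -/
def funOmega (q z : ℝ) : ℝ := (Function.invFunOn (funH q) (Set.Ici 1) z) ^ q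

/-- The constant `c = ω_q(((1-q)L^q + qL^(q-1)f)/h)`. -/
def bellC (q f h L : ℝ) : ℝ := funOmega q (((1 - q) * L ^ q + q * L ^ (q - 1) * f) / h)

/-- An extremal sequence for the Bellman function of three variables. -/
def IsExtremal (μ : Measure X) (T : DTree X μ) (q f h L : ℝ) (φ : ℕ → X → ℝ) : Prop :=
  (∀ n x, 0 ≤ φ n x) ∧ (∀ n, Measurable (φ n)) ∧ (∀ n, Integrable (φ n) μ) ∧
  (∀ n, ∫ x, φ n x ∂μ = f) ∧ (∀ n, ∫ x, φ n x ^ q ∂μ = h) ∧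
  Tendsto (fun n => ∫ x, (max (trMax μ T (φ n) x) L) ^ q ∂μ) atTop
    (nhds (bellC q f h L * h))

namespace S14

structure LvlOK (μ : Measure X) (T : DTree X μ) (lvl : ℕ → Set (Set X)) : Prop where
  zero : lvl 0 = {Set.univ}
  succ : ∀ m, lvl (m + 1) = ⋃ I ∈ lvl m, T.child I
  memEq : T.mem = ⋃ m, lvl m

variable {μ : Measure X} {T : DTree X μ}

theorem exists_lvlOK (T : DTree X μ) : ∃ lvl, LvlOK μ T lvl := by
  obtain ⟨lvl, h0, h1, h2, _⟩ := T.generated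
  exact ⟨lvl, h0, h1, h2⟩

variable {lvl : ℕ → Set (Set X)}

theorem LvlOK.sub_mem (h : LvlOK μ T lvl) {m : ℕ} {I : Set X} (hI : I ∈ lvl m) :
    I ∈ T.mem := by
  rw [h.memEq]; exact mem_iUnion.2 ⟨m, hI⟩

theorem LvlOK.partition (h : LvlOK μ T lvl) (m : ℕ) :
    ⋃₀ lvl m = univ ∧ (lvl m).Pairwise Disjoint ∧ (lvl m).Countable := by
  induction m with
  | zero =>
    rw [h.zero]
    exact ⟨sUnion_singleton _, Set.pairwise_singleton _ _, countable_singleton _⟩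
  | succ m ih =>
    obtain ⟨hcov, hdis, hcnt⟩ := ih
    rw [h.succ m]
    refine ⟨?_, ?_, ?_⟩
    · ext x
      simp only [mem_sUnion, mem_iUnion, mem_univ, iff_true]
      have hx : x ∈ ⋃₀ lvl m := hcov ▸ mem_univ x
      obtain ⟨I, hI, hxI⟩ := hx
      have hx2 : x ∈ ⋃₀ T.child I := by rw [T.child_union I (h.sub_mem hI)]; exact hxI
      obtain ⟨J, hJ, hxJ⟩ := hx2
      exact ⟨J, ⟨I, hI, hJ⟩, hxJ⟩
    · intro J₁ hJ₁ J₂ hJ₂ hne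
      simp only [mem_iUnion] at hJ₁ hJ₂
      obtain ⟨I₁, hI₁, hc₁⟩ := hJ₁
      obtain ⟨I₂, hI₂, hc₂⟩ := hJ₂
      by_cases hII : I₁ = I₂
      · subst hII
        exact T.child_disj I₁ (h.sub_mem hI₁) hc₁ hc₂ hne
      · exact (hdis hI₁ hI₂ hII).mono (T.child_sub _ (h.sub_mem hI₁) _ hc₁)
          (T.child_sub _ (h.sub_mem hI₂) _ hc₂)
    · exact hcnt.biUnion fun I hI => T.child_countable I (h.sub_mem hI)

/-- The level-`m` piece containing `x`. -/
def chn (lvl : ℕ → Set (Set X)) (m : ℕ) (x : X) : Set X :=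
  ⋃₀ {I | I ∈ lvl m ∧ x ∈ I}

theorem chn_spec (h : LvlOK μ T lvl) (m : ℕ) (x : X) :
    chn lvl m x ∈ lvl m ∧ x ∈ chn lvl m x := by
  obtain ⟨hcov, hdis, -⟩ := h.partition m
  have hx : x ∈ ⋃₀ lvl m := hcov ▸ mem_univ x
  obtain ⟨I₀, hI₀, hxI₀⟩ := hx
  have hset : {I | I ∈ lvl m ∧ x ∈ I} = {I₀} := by
    ext J
    constructor
    · rintro ⟨hJ, hxJ⟩
      by_contra hne
      exact Set.disjoint_left.1 (hdis hJ hI₀ hne) hxJ hxI₀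
    · rintro rfl
      exact ⟨hI₀, hxI₀⟩
  rw [chn, hset, sUnion_singleton]
  exact ⟨hI₀, hxI₀⟩

theorem chn_eq (h : LvlOK μ T lvl) {m : ℕ} {x : X} {I : Set X}
    (hI : I ∈ lvl m) (hx : x ∈ I) : chn lvl m x = I := by
  obtain ⟨hc, hxc⟩ := chn_spec h m x
  by_contra hne
  exact Set.disjoint_left.1 ((h.partition m).2.1 hc hI hne) hxc hx

theorem chn_mem_lvl (h : LvlOK μ T lvl) (m : ℕ) (x : X) : chn lvl m x ∈ lvl m :=
  (chn_spec h m x).1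

theorem mem_chn (h : LvlOK μ T lvl) (m : ℕ) (x : X) : x ∈ chn lvl m x :=
  (chn_spec h m x).2

theorem chn_succ_sub (h : LvlOK μ T lvl) (m : ℕ) (x : X) :
    chn lvl (m + 1) x ⊆ chn lvl m x := by
  have h1 := chn_mem_lvl h (m + 1) x
  rw [h.succ m] at h1
  simp only [mem_iUnion] at h1
  obtain ⟨J, hJ, hc⟩ := h1
  have hsub : chn lvl (m + 1) x ⊆ J := T.child_sub J (h.sub_mem hJ) _ hc
  have hxJ : x ∈ J := hsub (mem_chn h (m + 1) x)
  rw [chn_eq h hJ hxJ]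
  exact hsub

theorem chn_mono (h : LvlOK μ T lvl) {k m : ℕ} (hkm : k ≤ m) (x : X) :
    chn lvl m x ⊆ chn lvl k x := by
  induction m with
  | zero => simp_all
  | succ m ih =>
    rcases Nat.lt_or_ge k (m + 1) with hk | hk
    · exact (chn_succ_sub h m x).trans (ih (Nat.lt_succ_iff.1 hk))
    · have : k = m + 1 := le_antisymm hkm hk
      subst this
      rfl

theorem chn_of_mem (h : LvlOK μ T lvl) {I : Set X} {x : X}
    (hI : I ∈ T.mem) (hx : x ∈ I) : ∃ m, chn lvl m x = I := by
  rw [h.memEq] at hI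
  obtain ⟨m, hm⟩ := mem_iUnion.1 hI
  exact ⟨m, chn_eq h hm hx⟩

variable {ι : Type*} {Ifam : ι → Set X}

open Classical in
/-- The stopped piece at stage `m` containing `x`. -/
def spc (lvl : ℕ → Set (Set X)) (Ifam : ι → Set X) (m : ℕ) (x : X) : Set X :=
  if h : ∃ jk : ι × ℕ, jk.2 ≤ m ∧ chn lvl jk.2 x = Ifam jk.1 then Ifam h.choose.1
  else chn lvl m x

theorem fam_eq (hdisj : Pairwise (Function.onFun Disjoint Ifam)) {j j' : ι} {x : X}
    (hj : x ∈ Ifam j) (hj' : x ∈ Ifam j') : Ifam j = Ifam j' := by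
  rcases eq_or_ne j j' with rfl | hne
  · rfl
  · exact absurd hj' (Set.disjoint_left.1 (hdisj hne) hj)

theorem spc_frozen (h : LvlOK μ T lvl) (hdisj : Pairwise (Function.onFun Disjoint Ifam))
    {m k : ℕ} {x : X} {j : ι} (hk : k ≤ m) (hc : chn lvl k x = Ifam j) :
    spc lvl Ifam m x = Ifam j := by
  have hex : ∃ jk : ι × ℕ, jk.2 ≤ m ∧ chn lvl jk.2 x = Ifam jk.1 := ⟨(j, k), hk, hc⟩
  rw [spc, dif_pos hex]
  obtain ⟨-, hc'⟩ := hex.choose_spec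
  have hx1 : x ∈ Ifam hex.choose.1 := hc' ▸ mem_chn h _ x
  have hx2 : x ∈ Ifam j := hc ▸ mem_chn h k x
  exact fam_eq hdisj hx1 hx2

theorem spc_unfrozen {m : ℕ} {x : X}
    (hnot : ¬ ∃ jk : ι × ℕ, jk.2 ≤ m ∧ chn lvl jk.2 x = Ifam jk.1) :
    spc lvl Ifam m x = chn lvl m x := dif_neg hnot

theorem spc_cases (h : LvlOK μ T lvl) (hdisj : Pairwise (Function.onFun Disjoint Ifam))
    (m : ℕ) (x : X) :
    (∃ j k, k ≤ m ∧ chn lvl k x = Ifam j ∧ spc lvl Ifam m x = Ifam j) ∨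
      (spc lvl Ifam m x = chn lvl m x ∧
        ¬ ∃ jk : ι × ℕ, jk.2 ≤ m ∧ chn lvl jk.2 x = Ifam jk.1) := by
  by_cases hex : ∃ jk : ι × ℕ, jk.2 ≤ m ∧ chn lvl jk.2 x = Ifam jk.1
  · obtain ⟨⟨j, k⟩, hk, hc⟩ := hex
    exact Or.inl ⟨j, k, hk, hc, spc_frozen h hdisj hk hc⟩
  · exact Or.inr ⟨spc_unfrozen hex, hex⟩

theorem mem_spc (h : LvlOK μ T lvl) (hdisj : Pairwise (Function.onFun Disjoint Ifam))
    (m : ℕ) (x : X) : x ∈ spc lvl Ifam m x := by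
  rcases spc_cases h hdisj m x with ⟨j, k, hk, hc, heq⟩ | ⟨heq, -⟩
  · rw [heq, ← hc]; exact mem_chn h k x
  · rw [heq]; exact mem_chn h m x

theorem spc_mem_tree (h : LvlOK μ T lvl) (hIm : ∀ j, Ifam j ∈ T.mem)
    (hdisj : Pairwise (Function.onFun Disjoint Ifam)) (m : ℕ) (x : X) :
    spc lvl Ifam m x ∈ T.mem := by
  rcases spc_cases h hdisj m x with ⟨j, k, hk, hc, heq⟩ | ⟨heq, -⟩
  · rw [heq]; exact hIm j
  · rw [heq]; exact h.sub_mem (chn_mem_lvl h m x)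

theorem spc_succ_sub (h : LvlOK μ T lvl) (hdisj : Pairwise (Function.onFun Disjoint Ifam))
    (m : ℕ) (x : X) : spc lvl Ifam (m + 1) x ⊆ spc lvl Ifam m x := by
  rcases spc_cases h hdisj m x with ⟨j, k, hk, hc, heq⟩ | ⟨heq, hnot⟩
  · rw [heq, spc_frozen h hdisj (hk.trans (Nat.le_succ m)) hc]
  · rcases spc_cases h hdisj (m + 1) x with ⟨j', k', hk', hc', heq'⟩ | ⟨heq', -⟩
    · have hk'' : k' = m + 1 := by
        rcases Nat.lt_or_ge k' (m + 1) with hlt | hge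
        · exact absurd ⟨(j', k'), Nat.lt_succ_iff.1 hlt, hc'⟩ hnot
        · exact le_antisymm hk' hge
      subst hk''
      rw [heq', heq, ← hc']
      exact chn_succ_sub h m x
    · rw [heq', heq]
      exact chn_succ_sub h m x

theorem spc_mono (h : LvlOK μ T lvl) (hdisj : Pairwise (Function.onFun Disjoint Ifam))
    {k m : ℕ} (hkm : k ≤ m) (x : X) : spc lvl Ifam m x ⊆ spc lvl Ifam k x := by
  induction m with
  | zero => simp_all
  | succ m ih =>
    rcases Nat.lt_or_ge k (m + 1) with hk | hk
    · exact (spc_succ_sub h hdisj m x).trans (ih (Nat.lt_succ_iff.1 hk))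
    · have : k = m + 1 := le_antisymm hkm hk
      subst this
      rfl

theorem spc_eq_or_disj (h : LvlOK μ T lvl) (hdisj : Pairwise (Function.onFun Disjoint Ifam))
    (m : ℕ) (x y : X) :
    spc lvl Ifam m x = spc lvl Ifam m y ∨ Disjoint (spc lvl Ifam m x) (spc lvl Ifam m y) := by
  rcases spc_cases h hdisj m x with ⟨j, k, hk, hc, heq⟩ | ⟨heq, hnot⟩ <;>
    rcases spc_cases h hdisj m y with ⟨j', k', hk', hc', heq'⟩ | ⟨heq', hnot'⟩
  · rw [heq, heq']
    rcases eq_or_ne j j' with rfl | hne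
    · exact Or.inl rfl
    · exact Or.inr (hdisj hne)
  · -- x frozen at I j (= chn lvl k x ∈ lvl k), y unfrozen
    rw [heq, heq']
    by_cases hd : Disjoint (Ifam j) (chn lvl m y)
    · exact Or.inr hd
    · exfalso
      obtain ⟨z, hz1, hz2⟩ := Set.not_disjoint_iff.1 hd
      have hIlvl : Ifam j ∈ lvl k := hc ▸ chn_mem_lvl h k x
      have h1 : chn lvl k z = Ifam j := chn_eq h hIlvl hz1
      have h2 : chn lvl m z = chn lvl m y := chn_eq h (chn_mem_lvl h m y) hz2
      have h3 : chn lvl m y ⊆ Ifam j := by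
        rw [← h2, ← h1]
        exact chn_mono h hk z
      have h4 : chn lvl k y = Ifam j := chn_eq h hIlvl (h3 (mem_chn h m y))
      exact hnot' ⟨(j, k), hk, h4⟩
  · -- symmetric
    rw [heq, heq']
    by_cases hd : Disjoint (chn lvl m x) (Ifam j')
    · exact Or.inr hd
    · exfalso
      obtain ⟨z, hz1, hz2⟩ := Set.not_disjoint_iff.1 hd
      have hIlvl : Ifam j' ∈ lvl k' := hc' ▸ chn_mem_lvl h k' y
      have h1 : chn lvl k' z = Ifam j' := chn_eq h hIlvl hz2
      have h2 : chn lvl m z = chn lvl m x := chn_eq h (chn_mem_lvl h m x) hz1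
      have h3 : chn lvl m x ⊆ Ifam j' := by
        rw [← h2, ← h1]
        exact chn_mono h hk' z
      have h4 : chn lvl k' x = Ifam j' := chn_eq h hIlvl (h3 (mem_chn h m x))
      exact hnot ⟨(j', k'), hk', h4⟩
  · rw [heq, heq']
    rcases eq_or_ne (chn lvl m x) (chn lvl m y) with he | hne
    · exact Or.inl he
    · exact Or.inr ((h.partition m).2.1 (chn_mem_lvl h m x) (chn_mem_lvl h m y) hne)

theorem spc_congr (h : LvlOK μ T lvl) (hdisj : Pairwise (Function.onFun Disjoint Ifam))
    {m : ℕ} {x y : X} (hy : y ∈ spc lvl Ifam m x) {k : ℕ} (hk : k ≤ m) :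
    spc lvl Ifam k y = spc lvl Ifam k x := by
  have h1 : y ∈ spc lvl Ifam k x := spc_mono h hdisj hk x hy
  have h2 : y ∈ spc lvl Ifam k y := mem_spc h hdisj k y
  rcases spc_eq_or_disj h hdisj k y x with he | hd
  · exact he
  · exact absurd h1 (Set.disjoint_left.1 hd h2)

theorem spc_fiber (h : LvlOK μ T lvl) (hdisj : Pairwise (Function.onFun Disjoint Ifam))
    (m : ℕ) (x : X) : {y | spc lvl Ifam m y = spc lvl Ifam m x} = spc lvl Ifam m x := by
  ext y
  constructor
  · intro hy
    have := mem_spc h hdisj m y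
    rwa [hy] at this
  · intro hy
    exact spc_congr h hdisj hy le_rfl

theorem spc_range_countable [Countable ι] (h : LvlOK μ T lvl) (m : ℕ) :
    (Set.range (spc lvl Ifam m)).Countable := by
  have hsub : Set.range (spc lvl Ifam m) ⊆ lvl m ∪ Set.range Ifam := by
    rintro K ⟨x, rfl⟩
    rw [spc]
    split
    · exact Or.inr (mem_range_self _)
    · exact Or.inl (chn_mem_lvl h m x)
  exact (((h.partition m).2.2).union (countable_range Ifam)).mono hsub

theorem measurable_comp_spc [Countable ι] (h : LvlOK μ T lvl)
    (hIm : ∀ j, Ifam j ∈ T.mem) (hdisj : Pairwise (Function.onFun Disjoint Ifam))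
    (m : ℕ) (v : Set X → ℝ≥0∞) :
    Measurable fun x => v (spc lvl Ifam m x) := by
  intro t _
  have hset : (fun x => v (spc lvl Ifam m x)) ⁻¹' t =
      ⋃ K ∈ {K | K ∈ Set.range (spc lvl Ifam m) ∧ v K ∈ t}, K := by
    ext x
    simp only [mem_preimage, mem_iUnion, exists_prop, mem_setOf_eq]
    constructor
    · intro hx
      exact ⟨spc lvl Ifam m x, ⟨mem_range_self x, hx⟩, mem_spc h hdisj m x⟩
    · rintro ⟨K, ⟨⟨x₀, rfl⟩, hvK⟩, hxK⟩
      have : spc lvl Ifam m x = spc lvl Ifam m x₀ := spc_congr h hdisj hxK le_rfl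
      rwa [this]
  rw [hset]
  apply MeasurableSet.biUnion
  · exact ((spc_range_countable h m).mono (fun K hK => hK.1))
  · rintro K ⟨⟨x₀, rfl⟩, -⟩
    exact T.meas _ (spc_mem_tree h hIm hdisj m x₀)

/-! ### Elementary inequalities -/

theorem tangent_real {q : ℝ} (hq0 : 0 < q) (hq1 : q < 1) {a b : ℝ} (ha : 0 ≤ a) (hb : 0 < b) :
    a ^ q ≤ (1 - q) * b ^ q + q * (b ^ (q - 1) * a) := by
  have hgm := Real.geom_mean_le_arith_mean2_weighted (by linarith : (0:ℝ) ≤ 1 - q) hq0.le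
    zero_le_one (by positivity : (0:ℝ) ≤ a / b) (by ring)
  have key : (a / b) ^ q ≤ (1 - q) + q * (a / b) := by
    simpa [Real.one_rpow] using hgm
  have hbq : 0 < b ^ q := Real.rpow_pos_of_pos hb q
  have h2 : a ^ q = b ^ q * (a / b) ^ q := by
    rw [← Real.mul_rpow hb.le (by positivity)]
    rw [mul_div_cancel₀ _ hb.ne']
  calc a ^ q = b ^ q * (a / b) ^ q := h2
    _ ≤ b ^ q * ((1 - q) + q * (a / b)) := by
        exact mul_le_mul_of_nonneg_left key hbq.le
    _ = (1 - q) * b ^ q + q * (b ^ (q - 1) * a) := by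
        rw [Real.rpow_sub hb, Real.rpow_one]
        field_simp

theorem tangent_ennreal {q : ℝ} (hq0 : 0 < q) (hq1 : q < 1) {a b : ℝ≥0∞}
    (ha : a ≠ ∞) (hb0 : b ≠ 0) (hbt : b ≠ ∞) :
    a ^ q ≤ ENNReal.ofReal (1 - q) * b ^ q + ENNReal.ofReal q * (b ^ (q - 1) * a) := by
  have hβ : 0 < b.toReal := ENNReal.toReal_pos hb0 hbt
  have haa : a = ENNReal.ofReal a.toReal := (ENNReal.ofReal_toReal ha).symm
  have hbb : b = ENNReal.ofReal b.toReal := (ENNReal.ofReal_toReal hbt).symm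
  rw [haa, hbb, ENNReal.ofReal_rpow_of_nonneg ENNReal.toReal_nonneg hq0.le,
    ENNReal.ofReal_rpow_of_pos hβ, ENNReal.ofReal_rpow_of_pos hβ,
    ← ENNReal.ofReal_mul (Real.rpow_nonneg hβ.le _),
    ← ENNReal.ofReal_mul (by linarith : (0:ℝ) ≤ 1 - q),
    ← ENNReal.ofReal_mul hq0.le,
    ← ENNReal.ofReal_add (mul_nonneg (by linarith) (Real.rpow_nonneg ENNReal.toReal_nonneg _))
      (mul_nonneg hq0.le (mul_nonneg (Real.rpow_nonneg ENNReal.toReal_nonneg _) ENNReal.toReal_nonneg))]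
  exact ENNReal.ofReal_le_ofReal (tangent_real hq0 hq1 ENNReal.toReal_nonneg hβ)

theorem toReal_iSup_ofReal {g : ℕ → ℝ} (hg : ∀ n, 0 ≤ g n) :
    (⨆ n, ENNReal.ofReal (g n)).toReal = ⨆ n, g n := by
  by_cases hbdd : BddAbove (Set.range g)
  · have h1 : (⨆ n, ENNReal.ofReal (g n)) ≤ ENNReal.ofReal (⨆ n, g n) :=
      iSup_le fun n => ENNReal.ofReal_le_ofReal (le_ciSup hbdd n)
    have hfin : (⨆ n, ENNReal.ofReal (g n)) ≠ ∞ := (h1.trans_lt ENNReal.ofReal_lt_top).ne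
    apply le_antisymm
    · have h2 := ENNReal.toReal_mono ENNReal.ofReal_ne_top h1
      rwa [ENNReal.toReal_ofReal (Real.iSup_nonneg hg)] at h2
    · apply ciSup_le
      intro n
      have h3 : ENNReal.ofReal (g n) ≤ ⨆ n, ENNReal.ofReal (g n) := le_iSup (fun n => ENNReal.ofReal (g n)) n
      have h4 := ENNReal.toReal_mono hfin h3
      rwa [ENNReal.toReal_ofReal (hg n)] at h4
  · have h5 : (⨆ n, ENNReal.ofReal (g n)) = ∞ := by
      by_contra hne
      apply hbdd
      refine ⟨(⨆ n, ENNReal.ofReal (g n)).toReal, ?_⟩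
      rintro r ⟨n, rfl⟩
      have h3 : ENNReal.ofReal (g n) ≤ ⨆ n, ENNReal.ofReal (g n) := le_iSup (fun n => ENNReal.ofReal (g n)) n
      have h4 := ENNReal.toReal_mono hne h3
      rwa [ENNReal.toReal_ofReal (hg n)] at h4
    rw [h5, Real.iSup_of_not_bddAbove hbdd]
    simp

theorem iSup_rpow {q : ℝ} (hq : 0 < q) (g : ℕ → ℝ≥0∞) :
    (⨆ n, g n) ^ q = ⨆ n, g n ^ q := by
  apply le_antisymm
  · have h1 : ∀ n, g n ≤ (⨆ n, g n ^ q) ^ (1 / q) := by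
      intro n
      have h2 : g n ^ q ≤ ⨆ n, g n ^ q := le_iSup (fun n => g n ^ q) n
      have h3 := ENNReal.rpow_le_rpow h2 (by positivity : (0:ℝ) ≤ 1 / q)
      rwa [← ENNReal.rpow_mul, mul_one_div, div_self hq.ne', ENNReal.rpow_one] at h3
    have h4 := ENNReal.rpow_le_rpow (iSup_le h1) hq.le
    rwa [← ENNReal.rpow_mul, one_div_mul_cancel hq.ne', ENNReal.rpow_one] at h4
  · exact iSup_le fun n => ENNReal.rpow_le_rpow (le_iSup g n) hq.le

theorem rpow_anti {q : ℝ} (hq1 : q < 1) {a b : ℝ≥0∞} (hab : a ≤ b) :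
    b ^ (q - 1) ≤ a ^ (q - 1) := by
  have he : q - 1 = -(1 - q) := by ring
  rw [he, ENNReal.rpow_neg, ENNReal.rpow_neg]
  exact ENNReal.inv_le_inv.2 (ENNReal.rpow_le_rpow hab (by linarith))

/-! ### The conditional-expectation identity on stopped pieces -/

theorem cornerstone [Countable ι] [IsFiniteMeasure μ] (h : LvlOK μ T lvl)
    (hIm : ∀ j, Ifam j ∈ T.mem) (hdisj : Pairwise (Function.onFun Disjoint Ifam))
    (m : ℕ) (Φ : X → ℝ≥0∞) (F : X → ℝ≥0∞)
    (hF : ∀ x y, y ∈ spc lvl Ifam m x → F y = F x) (hFfin : ∀ x, F x ≠ ∞) :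
    ∫⁻ x, F x * ((∫⁻ z in spc lvl Ifam m x, Φ z ∂μ) / μ (spc lvl Ifam m x)) ∂μ =
      ∫⁻ x, F x * Φ x ∂μ := by
  have hRc : (Set.range (spc lvl Ifam m)).Countable := spc_range_countable h m
  haveI := hRc.to_subtype
  have hmeasK : ∀ K : Set.range (spc lvl Ifam m), MeasurableSet (K : Set X) := by
    rintro ⟨K, x₀, rfl⟩
    exact T.meas _ (spc_mem_tree h hIm hdisj m x₀)
  have hcover : ⋃ K : Set.range (spc lvl Ifam m), (K : Set X) = univ := by
    ext x
    simp only [mem_iUnion, mem_univ, iff_true]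
    exact ⟨⟨spc lvl Ifam m x, mem_range_self x⟩, mem_spc h hdisj m x⟩
  have hdis : Pairwise (Function.onFun Disjoint fun K : Set.range (spc lvl Ifam m) => (K : Set X)) := by
    rintro ⟨K, a, rfl⟩ ⟨K', b, rfl⟩ hne
    rcases spc_eq_or_disj h hdisj m a b with he | hd
    · exact absurd (Subtype.ext he) hne
    · exact hd
  have key : ∀ (g : X → ℝ≥0∞),
      ∫⁻ x, g x ∂μ = ∑' K : Set.range (spc lvl Ifam m), ∫⁻ x in (K : Set X), g x ∂μ := by
    intro g
    rw [← setLIntegral_univ, ← hcover, lintegral_iUnion hmeasK hdis]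
  rw [key fun x => F x * ((∫⁻ z in spc lvl Ifam m x, Φ z ∂μ) / μ (spc lvl Ifam m x)),
    key fun x => F x * Φ x]
  apply tsum_congr
  rintro ⟨K, a, rfl⟩
  have hμ0 : μ (spc lvl Ifam m a) ≠ 0 := (T.pos _ (spc_mem_tree h hIm hdisj m a)).ne'
  have hμt : μ (spc lvl Ifam m a) ≠ ∞ := measure_ne_top μ _
  have hKmeas : MeasurableSet (spc lvl Ifam m a) := T.meas _ (spc_mem_tree h hIm hdisj m a)
  calc
    ∫⁻ x in spc lvl Ifam m a, F x * ((∫⁻ z in spc lvl Ifam m x, Φ z ∂μ) / μ (spc lvl Ifam m x)) ∂μ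
        = ∫⁻ _ in spc lvl Ifam m a,
            F a * ((∫⁻ z in spc lvl Ifam m a, Φ z ∂μ) / μ (spc lvl Ifam m a)) ∂μ := by
          apply lintegral_congr_ae
          filter_upwards [ae_restrict_mem hKmeas] with y hy
          have h1 : spc lvl Ifam m y = spc lvl Ifam m a := spc_congr h hdisj hy le_rfl
          rw [h1, hF a y hy]
    _ = F a * ((∫⁻ z in spc lvl Ifam m a, Φ z ∂μ) / μ (spc lvl Ifam m a)) *
          μ (spc lvl Ifam m a) := setLIntegral_const _ _
    _ = F a * ∫⁻ z in spc lvl Ifam m a, Φ z ∂μ := by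
          rw [mul_assoc, ENNReal.div_mul_cancel hμ0 hμt]
    _ = ∫⁻ z in spc lvl Ifam m a, F a * Φ z ∂μ := (lintegral_const_mul' _ _ (hFfin a)).symm
    _ = ∫⁻ z in spc lvl Ifam m a, F z * Φ z ∂μ := by
          apply lintegral_congr_ae
          filter_upwards [ae_restrict_mem hKmeas] with y hy
          rw [hF a y hy]

end S14

/-- the complement inequality for an arbitrary pairwise disjoint
family in `S_φ` (not necessarily maximal). -/
theorem statement14 {X : Type*} [MeasurableSpace X] (μ : Measure X)
    [IsProbabilityMeasure μ] [NullSingletonClass μ] (T : DTree X μ)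
    (q f : ℝ) (hq : q ∈ Set.Ioo (0 : ℝ) 1)
    (φ : X → ℝ) (h0 : ∀ x, 0 ≤ φ x) (hint : Integrable φ μ) (hgood : TGood μ T φ)
    (hf : (∫ x, φ x ∂μ) = f)
    {ι : Type*} [Countable ι] (I : ι → Set X)
    (hmem : ∀ j, I j ∈ trS μ T φ) (hdisj : Pairwise (Function.onFun Disjoint I))
    (β : ℝ) (hβ : 0 < β) :
    (∫ x in (⋃ j, I j)ᶜ, (trMax μ T φ x) ^ q ∂μ) ≤
      (1 / ((1 - q) * β)) *
        ((β + 1) * (f ^ q - ∑' j, (μ (I j)).toReal * trAvg μ φ (I j) ^ q) -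
          (β + 1) ^ q * ∫ x in (⋃ j, I j)ᶜ, φ x ^ q ∂μ) := by
  classical
  obtain ⟨lvl, hlvl⟩ := S14.exists_lvlOK T
  have hq0 : 0 < q := hq.1
  have hq1 : q < 1 := hq.2
  have habs : (fun y => |φ y|) = φ := funext fun y => abs_of_nonneg (h0 y)
  have htrMax : ∀ x, trMax μ T φ x = sSup {r : ℝ | ∃ J ∈ T.mem, x ∈ J ∧ r = trAvg μ φ J} := by
    intro x; rw [trMax, habs]
  have hfnn : 0 ≤ f := hf ▸ integral_nonneg h0
  have hImem : ∀ j, I j ∈ T.mem := by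
    intro j
    rcases hmem j with h' | h'
    · exact h'.1
    · rw [mem_singleton_iff] at h'; rw [h']; exact T.top_mem
  have hIjmeas : ∀ j, MeasurableSet (I j) := fun j => T.meas _ (hImem j)
  have hEmeas : MeasurableSet (⋃ j, I j) := MeasurableSet.iUnion fun j => hIjmeas j
  have hEcmeas : MeasurableSet (⋃ j, I j)ᶜ := hEmeas.compl
  have htrAvg_nn : ∀ K : Set X, 0 ≤ trAvg μ φ K := fun K =>
    mul_nonneg (inv_nonneg.2 ENNReal.toReal_nonneg) (integral_nonneg h0)
  rcases eq_or_lt_of_le hfnn with hf0 | hfpos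
  · -- degenerate case `f = 0`
    have hphi0 : φ =ᵐ[μ] 0 := (integral_eq_zero_iff_of_nonneg h0 hint).1 (by rw [hf, ← hf0])
    have havg : ∀ K : Set X, trAvg μ φ K = 0 := by
      intro K
      have hz : ∫ x in K, φ x ∂μ = 0 := by
        rw [integral_congr_ae (ae_restrict_of_ae hphi0)]
        simp
      rw [trAvg, hz, mul_zero]
    have hmax0 : ∀ x, trMax μ T φ x = 0 := by
      intro x
      rw [htrMax]
      have hsingle : {r : ℝ | ∃ J ∈ T.mem, x ∈ J ∧ r = trAvg μ φ J} = {0} := by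
        ext r
        simp only [mem_setOf_eq, mem_singleton_iff]
        constructor
        · rintro ⟨J, hJ, hxJ, rfl⟩; exact havg J
        · rintro rfl; exact ⟨univ, T.top_mem, mem_univ x, (havg _).symm⟩
      rw [hsingle, csSup_singleton]
    have hLHS : (∫ x in (⋃ j, I j)ᶜ, (trMax μ T φ x) ^ q ∂μ) = 0 := by
      have hz : ∀ x, (trMax μ T φ x) ^ q = 0 := fun x => by
        rw [hmax0, Real.zero_rpow hq0.ne']
      simp [hz]
    have hB : (∫ x in (⋃ j, I j)ᶜ, φ x ^ q ∂μ) = 0 := by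
      have hae : (fun x => φ x ^ q) =ᵐ[μ.restrict (⋃ j, I j)ᶜ] (fun _ => (0:ℝ)) := by
        filter_upwards [ae_restrict_of_ae hphi0] with x hx
        simp only [Pi.zero_apply] at hx
        rw [hx, Real.zero_rpow hq0.ne']
      rw [integral_congr_ae hae, integral_zero]
    have hts : (∑' j, (μ (I j)).toReal * trAvg μ φ (I j) ^ q) = 0 := by
      have : ∀ j, (μ (I j)).toReal * trAvg μ φ (I j) ^ q = 0 := fun j => by
        rw [havg, Real.zero_rpow hq0.ne', mul_zero]
      simp [this]
    rw [hLHS, hB, hts, ← hf0, Real.zero_rpow hq0.ne']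
    norm_num
  · -- main case `0 < f`
    obtain ⟨Φ, hΦ⟩ : ∃ F : X → ℝ≥0∞, F = fun x => ENNReal.ofReal (φ x) := ⟨_, rfl⟩
    obtain ⟨uE, huE⟩ : ∃ u : ℕ → X → ℝ≥0∞,
        u = fun m x => (∫⁻ z in S14.spc lvl I m x, Φ z ∂μ) / μ (S14.spc lvl I m x) := ⟨_, rfl⟩
    obtain ⟨ME, hME⟩ : ∃ M : ℕ → X → ℝ≥0∞,
        M = fun m x => ⨆ k, ⨆ _ : k ≤ m, uE k x := ⟨_, rfl⟩
    obtain ⟨MS, hMS⟩ : ∃ M : X → ℝ≥0∞, M = fun x => ⨆ m, ME m x := ⟨_, rfl⟩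
    have hlintΦ : ∫⁻ x, Φ x ∂μ = ENNReal.ofReal f := by
      have h1 := MeasureTheory.ofReal_integral_eq_lintegral_ofReal hint
        (Filter.Eventually.of_forall h0)
      rw [hf] at h1
      rw [hΦ]
      exact h1.symm
    have hpcmem : ∀ m x, S14.spc lvl I m x ∈ T.mem :=
      fun m x => S14.spc_mem_tree hlvl hImem hdisj m x
    have hμpc0 : ∀ m x, μ (S14.spc lvl I m x) ≠ 0 := fun m x => (T.pos _ (hpcmem m x)).ne'
    have hlint_le : ∀ K : Set X, ∫⁻ z in K, Φ z ∂μ ≤ ENNReal.ofReal f := by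
      intro K
      rw [← hlintΦ]
      exact lintegral_mono' Measure.restrict_le_self le_rfl
    have huE_fin : ∀ m x, uE m x ≠ ∞ := by
      intro m x
      rw [huE]
      exact (ENNReal.div_lt_top ((hlint_le _).trans_lt ENNReal.ofReal_lt_top).ne
        (hμpc0 m x)).ne
    have hpc0 : ∀ x, S14.spc lvl I 0 x = univ := by
      intro x
      have hchn0 : S14.chn lvl 0 x = univ := by
        have h1 := S14.chn_mem_lvl hlvl 0 x
        rw [hlvl.zero] at h1
        exact h1
      rcases S14.spc_cases hlvl hdisj 0 x with ⟨j, k, hk, hc, heq⟩ | ⟨heq, -⟩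
      · have hk0 : k = 0 := Nat.le_zero.1 hk
        subst hk0
        rw [heq, ← hc, hchn0]
      · rw [heq, hchn0]
    have huniv_eq : ∀ x, uE 0 x = ENNReal.ofReal f := by
      intro x
      rw [huE]
      simp only
      rw [hpc0 x, Measure.restrict_univ, hlintΦ, measure_univ, div_one]
    have hle_ME : ∀ {k m : ℕ}, k ≤ m → ∀ x, uE k x ≤ ME m x := by
      intro k m hk x
      rw [hME]
      exact le_iSup_of_le k (le_iSup_of_le hk le_rfl)
    have hME0 : ∀ x, ME 0 x = uE 0 x := by
      intro x
      refine le_antisymm ?_ (hle_ME le_rfl x)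
      rw [hME]
      refine iSup_le fun k => iSup_le fun hk => ?_
      obtain rfl : k = 0 := Nat.le_zero.1 hk
      exact le_rfl
    have hME_succ : ∀ m x, ME (m + 1) x = max (ME m x) (uE (m + 1) x) := by
      intro m x
      apply le_antisymm
      · conv_lhs => rw [hME]
        refine iSup_le fun k => iSup_le fun hk => ?_
        rcases Nat.lt_or_ge k (m + 1) with hlt | hge
        · exact le_max_of_le_left (hle_ME (Nat.lt_succ_iff.1 hlt) x)
        · obtain rfl : k = m + 1 := le_antisymm hk hge
          exact le_max_right _ _
      · refine max_le ?_ (hle_ME le_rfl x)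
        conv_lhs => rw [hME]
        conv_rhs => rw [hME]
        exact iSup_le fun k => iSup_le fun hk =>
          le_iSup_of_le k (le_iSup_of_le (hk.trans (Nat.le_succ m)) le_rfl)
    have hME_mono : ∀ {m m' : ℕ}, m ≤ m' → ∀ x, ME m x ≤ ME m' x := by
      intro m m' hmm' x
      conv_lhs => rw [hME]
      exact iSup_le fun k => iSup_le fun hk => hle_ME (hk.trans hmm') x
    have hofRf_pos : ENNReal.ofReal f ≠ 0 := by
      simp only [ne_eq, ENNReal.ofReal_eq_zero, not_le]
      exact hfpos
    have hME_lb : ∀ m x, ENNReal.ofReal f ≤ ME m x := by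
      intro m x
      rw [← huniv_eq x]
      exact hle_ME (Nat.zero_le m) x
    have hME_pos : ∀ m x, ME m x ≠ 0 := fun m x h =>
      hofRf_pos (le_antisymm (h ▸ hME_lb m x) zero_le)
    have hME_fin : ∀ m x, ME m x ≠ ∞ := by
      intro m x
      induction m with
      | zero => rw [hME0]; exact huE_fin 0 x
      | succ m ih =>
        rw [hME_succ]
        exact (max_lt ih.lt_top (huE_fin (m + 1) x).lt_top).ne
    have hpow_fin : ∀ a : ℝ≥0∞, a ≠ 0 → a ≠ ∞ → a ^ (q - 1) ≠ ∞ := by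
      intro a h0' ht' h
      rcases ENNReal.rpow_eq_top_iff.1 h with ⟨h1, -⟩ | ⟨h1, -⟩
      exacts [h0' h1, ht' h1]
    have hME_congr : ∀ (m : ℕ) (x y : X), y ∈ S14.spc lvl I m x → ME m y = ME m x := by
      intro m x y hy
      have huEc : ∀ k, k ≤ m → uE k y = uE k x := by
        intro k hk
        rw [huE]
        simp only
        rw [S14.spc_congr hlvl hdisj hy hk]
      have h2 : ∀ z w : X, (∀ k, k ≤ m → uE k z = uE k w) → ME m z ≤ ME m w := by
        intro z w hzw
        rw [hME]
        exact iSup_le fun k => iSup_le fun hk =>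
          (hzw k hk) ▸ le_iSup_of_le k (le_iSup_of_le hk le_rfl)
      exact le_antisymm (h2 _ _ huEc) (h2 _ _ fun k hk => (huEc k hk).symm)
    have huE_meas : ∀ m, Measurable (uE m) := by
      intro m
      rw [huE]
      exact S14.measurable_comp_spc hlvl hImem hdisj m
        (fun K => (∫⁻ z in K, Φ z ∂μ) / μ K)
    have hME_meas : ∀ m, Measurable (ME m) := by
      intro m
      induction m with
      | zero =>
        have h1 : ME 0 = uE 0 := funext hME0
        rw [h1]; exact huE_meas 0
      | succ m ih =>
        have h1 : ME (m + 1) = fun x => max (ME m x) (uE (m + 1) x) := funext (hME_succ m)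
        rw [h1]; exact Measurable.max ih (huE_meas (m + 1))
    have hrpow_meas : ∀ (g : X → ℝ≥0∞) (r : ℝ), Measurable g →
        Measurable fun x => g x ^ r := fun g r hg => hg.pow measurable_const
    have hcorner : ∀ (m : ℕ) (F : X → ℝ≥0∞),
        (∀ x y, y ∈ S14.spc lvl I m x → F y = F x) → (∀ x, F x ≠ ∞) →
        ∫⁻ x, F x * uE m x ∂μ = ∫⁻ x, F x * Φ x ∂μ := by
      intro m F hF hFfin
      simp only [huE]
      exact S14.cornerstone hlvl hImem hdisj m Φ F hF hFfin
    have hsplitInt : ∀ (G H : X → ℝ≥0∞), Measurable G →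
        (∫⁻ x, (ENNReal.ofReal (1 - q) * G x + ENNReal.ofReal q * H x) ∂μ) =
          ENNReal.ofReal (1 - q) * ∫⁻ x, G x ∂μ + ENNReal.ofReal q * ∫⁻ x, H x ∂μ := by
      intro G H hG
      rw [lintegral_add_left (hG.const_mul _)]
      rw [lintegral_const_mul' _ _ ENNReal.ofReal_ne_top,
        lintegral_const_mul' _ _ ENNReal.ofReal_ne_top]
    have hstep : ∀ m : ℕ,
        ENNReal.ofReal (1 - q) * ∫⁻ x, ME (m + 1) x ^ q ∂μ +
            ENNReal.ofReal q * ∫⁻ x, ME (m + 1) x ^ (q - 1) * Φ x ∂μ ≤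
          ENNReal.ofReal (1 - q) * ∫⁻ x, ME m x ^ q ∂μ +
            ENNReal.ofReal q * ∫⁻ x, ME m x ^ (q - 1) * Φ x ∂μ := by
      intro m
      have e1 : ∫⁻ x, ME (m + 1) x ^ (q - 1) * Φ x ∂μ =
          ∫⁻ x, ME (m + 1) x ^ (q - 1) * uE (m + 1) x ∂μ :=
        (hcorner (m + 1) _ (fun x y hy => by rw [hME_congr (m + 1) x y hy])
          (fun x => hpow_fin _ (hME_pos _ x) (hME_fin _ x))).symm
      have e2 : ∫⁻ x, ME m x ^ (q - 1) * Φ x ∂μ =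
          ∫⁻ x, ME m x ^ (q - 1) * uE (m + 1) x ∂μ :=
        (hcorner (m + 1) _
          (fun x y hy => by rw [hME_congr m x y (S14.spc_succ_sub hlvl hdisj m x hy)])
          (fun x => hpow_fin _ (hME_pos _ x) (hME_fin _ x))).symm
      rw [e1, e2]
      have hpt : ∀ x,
          ENNReal.ofReal (1 - q) * ME (m + 1) x ^ q +
              ENNReal.ofReal q * (ME (m + 1) x ^ (q - 1) * uE (m + 1) x) ≤
            ENNReal.ofReal (1 - q) * ME m x ^ q +
              ENNReal.ofReal q * (ME m x ^ (q - 1) * uE (m + 1) x) := by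
        intro x
        rcases le_or_gt (uE (m + 1) x) (ME m x) with hle | hlt
        · rw [hME_succ m x, max_eq_left hle]
        · have hmax : ME (m + 1) x = uE (m + 1) x := by
            rw [hME_succ m x, max_eq_right hlt.le]
          rw [hmax]
          have ha0 : uE (m + 1) x ≠ 0 := fun h => by
            rw [h] at hlt
            exact (not_lt_of_ge zero_le) hlt
          have hafin : uE (m + 1) x ≠ ∞ := huE_fin (m + 1) x
          have haq : uE (m + 1) x ^ (q - 1) * uE (m + 1) x = uE (m + 1) x ^ q := by
            calc uE (m + 1) x ^ (q - 1) * uE (m + 1) x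
                = uE (m + 1) x ^ (q - 1) * uE (m + 1) x ^ (1 : ℝ) := by
                  rw [ENNReal.rpow_one]
              _ = uE (m + 1) x ^ (q - 1 + 1) := (ENNReal.rpow_add _ _ ha0 hafin).symm
              _ = uE (m + 1) x ^ q := by norm_num
          rw [haq]
          have hco : ENNReal.ofReal (1 - q) * uE (m + 1) x ^ q +
              ENNReal.ofReal q * uE (m + 1) x ^ q = uE (m + 1) x ^ q := by
            rw [← add_mul, ← ENNReal.ofReal_add (by linarith) hq0.le]
            norm_num
          rw [hco]
          exact S14.tangent_ennreal hq0 hq1 hafin (hME_pos m x) (hME_fin m x)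
      calc ENNReal.ofReal (1 - q) * ∫⁻ x, ME (m + 1) x ^ q ∂μ +
            ENNReal.ofReal q * ∫⁻ x, ME (m + 1) x ^ (q - 1) * uE (m + 1) x ∂μ
          = ∫⁻ x, (ENNReal.ofReal (1 - q) * ME (m + 1) x ^ q +
              ENNReal.ofReal q * (ME (m + 1) x ^ (q - 1) * uE (m + 1) x)) ∂μ :=
            (hsplitInt _ _ (hrpow_meas _ q (hME_meas (m + 1)))).symm
        _ ≤ ∫⁻ x, (ENNReal.ofReal (1 - q) * ME m x ^ q +
              ENNReal.ofReal q * (ME m x ^ (q - 1) * uE (m + 1) x)) ∂μ :=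
            lintegral_mono hpt
        _ = ENNReal.ofReal (1 - q) * ∫⁻ x, ME m x ^ q ∂μ +
              ENNReal.ofReal q * ∫⁻ x, ME m x ^ (q - 1) * uE (m + 1) x ∂μ :=
            hsplitInt _ _ (hrpow_meas _ q (hME_meas m))
    have hW_le : ∀ m : ℕ,
        ENNReal.ofReal (1 - q) * ∫⁻ x, ME m x ^ q ∂μ +
            ENNReal.ofReal q * ∫⁻ x, ME m x ^ (q - 1) * Φ x ∂μ ≤
          ENNReal.ofReal (f ^ q) := by
      intro m
      induction m with
      | zero =>
        have hME0' : ∀ x, ME 0 x = ENNReal.ofReal f := fun x =>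
          (hME0 x).trans (huniv_eq x)
        have t1 : ∫⁻ x, ME 0 x ^ q ∂μ = ENNReal.ofReal f ^ q := by
          simp only [hME0']
          rw [lintegral_const, measure_univ, mul_one]
        have t2 : ∫⁻ x, ME 0 x ^ (q - 1) * Φ x ∂μ = ENNReal.ofReal f ^ q := by
          simp only [hME0']
          rw [lintegral_const_mul' _ _
            (hpow_fin _ hofRf_pos ENNReal.ofReal_ne_top), hlintΦ]
          calc ENNReal.ofReal f ^ (q - 1) * ENNReal.ofReal f
              = ENNReal.ofReal f ^ (q - 1) * ENNReal.ofReal f ^ (1 : ℝ) := by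
                rw [ENNReal.rpow_one]
            _ = ENNReal.ofReal f ^ (q - 1 + 1) :=
                (ENNReal.rpow_add _ _ hofRf_pos ENNReal.ofReal_ne_top).symm
            _ = ENNReal.ofReal f ^ q := by norm_num
        rw [t1, t2, ← add_mul, ← ENNReal.ofReal_add (by linarith) hq0.le]
        norm_num
        rw [ENNReal.ofReal_rpow_of_pos hfpos]
      | succ m ih => exact (hstep m).trans ih
    -- frozen-piece lower bound
    have hLj : ∀ j, ∃ L, I j ∈ lvl L := by
      intro j
      have h1 := hImem j
      rw [hlvl.memEq] at h1
      exact mem_iUnion.1 h1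
    obtain ⟨Lf, hLf⟩ : ∃ Lf : ι → ℕ, ∀ j, I j ∈ lvl (Lf j) :=
      ⟨fun j => (hLj j).choose, fun j => (hLj j).choose_spec⟩
    have hfroz : ∀ (j) (m : ℕ), Lf j ≤ m → ∀ x ∈ I j, S14.spc lvl I m x = I j := by
      intro j m hm x hx
      exact S14.spc_frozen hlvl hdisj hm (S14.chn_eq hlvl (hLf j) hx)
    have hμIj0 : ∀ j, μ (I j) ≠ 0 := fun j => (T.pos _ (hImem j)).ne'
    have hIjne : ∀ j, (I j).Nonempty := fun j => nonempty_of_measure_ne_zero (hμIj0 j)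
    obtain ⟨yE, hyE⟩ : ∃ y : ι → ℝ≥0∞,
        y = fun j => (∫⁻ z in I j, Φ z ∂μ) / μ (I j) := ⟨_, rfl⟩
    have hyE_fin : ∀ j, yE j ≠ ∞ := by
      intro j
      rw [hyE]
      exact (ENNReal.div_lt_top ((hlint_le _).trans_lt ENNReal.ofReal_lt_top).ne
        (hμIj0 j)).ne
    have hyE_mul : ∀ j, yE j * μ (I j) = ∫⁻ z in I j, Φ z ∂μ := by
      intro j
      rw [hyE]
      exact ENNReal.div_mul_cancel (hμIj0 j) (measure_ne_top μ _)
    have hfrozen_bound : ∀ (j) (m : ℕ), Lf j ≤ m →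
        μ (I j) * yE j ^ q ≤
          ENNReal.ofReal (1 - q) * ∫⁻ x in I j, ME m x ^ q ∂μ +
            ENNReal.ofReal q * ∫⁻ x in I j, ME m x ^ (q - 1) * Φ x ∂μ := by
      intro j m hm
      obtain ⟨x₀, hx₀⟩ := hIjne j
      have hpcj : S14.spc lvl I m x₀ = I j := hfroz j m hm x₀ hx₀
      have hMEconst : ∀ x ∈ I j, ME m x = ME m x₀ := fun x hx =>
        hME_congr m x₀ x (hpcj ▸ hx)
      have t1 : ∫⁻ x in I j, ME m x ^ q ∂μ = ME m x₀ ^ q * μ (I j) := by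
        calc ∫⁻ x in I j, ME m x ^ q ∂μ = ∫⁻ _ in I j, ME m x₀ ^ q ∂μ := by
              apply lintegral_congr_ae
              filter_upwards [ae_restrict_mem (hIjmeas j)] with y hy
              rw [hMEconst y hy]
          _ = ME m x₀ ^ q * μ (I j) := setLIntegral_const _ _
      have t2 : ∫⁻ x in I j, ME m x ^ (q - 1) * Φ x ∂μ =
          ME m x₀ ^ (q - 1) * (yE j * μ (I j)) := by
        calc ∫⁻ x in I j, ME m x ^ (q - 1) * Φ x ∂μ
            = ∫⁻ x in I j, ME m x₀ ^ (q - 1) * Φ x ∂μ := by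
              apply lintegral_congr_ae
              filter_upwards [ae_restrict_mem (hIjmeas j)] with y hy
              rw [hMEconst y hy]
          _ = ME m x₀ ^ (q - 1) * ∫⁻ x in I j, Φ x ∂μ :=
              lintegral_const_mul' _ _ (hpow_fin _ (hME_pos m x₀) (hME_fin m x₀))
          _ = ME m x₀ ^ (q - 1) * (yE j * μ (I j)) := by rw [hyE_mul]
      rw [t1, t2]
      have htan := S14.tangent_ennreal hq0 hq1 (hyE_fin j) (hME_pos m x₀) (hME_fin m x₀)
      calc μ (I j) * yE j ^ q
          ≤ μ (I j) * (ENNReal.ofReal (1 - q) * ME m x₀ ^ q +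
              ENNReal.ofReal q * (ME m x₀ ^ (q - 1) * yE j)) := mul_le_mul_right htan _
        _ = ENNReal.ofReal (1 - q) * (ME m x₀ ^ q * μ (I j)) +
              ENNReal.ofReal q * (ME m x₀ ^ (q - 1) * (yE j * μ (I j))) := by ring
    -- decomposition of total integrals
    have hdec : ∀ (s : Finset ι) (g : X → ℝ≥0∞),
        ∫⁻ x in (⋃ j, I j)ᶜ, g x ∂μ + ∑ j ∈ s, ∫⁻ x in I j, g x ∂μ ≤ ∫⁻ x, g x ∂μ := by
      intro s g
      have h1 : ∫⁻ x, g x ∂μ =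
          ∫⁻ x in ⋃ j, I j, g x ∂μ + ∫⁻ x in (⋃ j, I j)ᶜ, g x ∂μ :=
        (lintegral_add_compl g hEmeas).symm
      have h2 : ∑ j ∈ s, ∫⁻ x in I j, g x ∂μ = ∫⁻ x in ⋃ j ∈ s, I j, g x ∂μ :=
        (lintegral_biUnion_finset (fun a _ b _ hab => hdisj hab)
          (fun b _ => hIjmeas b) g).symm
      have h3 : ∫⁻ x in ⋃ j ∈ s, I j, g x ∂μ ≤ ∫⁻ x in ⋃ j, I j, g x ∂μ :=
        lintegral_mono' (Measure.restrict_mono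
          (iUnion₂_subset fun j _ => subset_iUnion I j) le_rfl) le_rfl
      calc ∫⁻ x in (⋃ j, I j)ᶜ, g x ∂μ + ∑ j ∈ s, ∫⁻ x in I j, g x ∂μ
          = ∫⁻ x in (⋃ j, I j)ᶜ, g x ∂μ + ∫⁻ x in ⋃ j ∈ s, I j, g x ∂μ := by rw [h2]
        _ ≤ ∫⁻ x in (⋃ j, I j)ᶜ, g x ∂μ + ∫⁻ x in ⋃ j, I j, g x ∂μ :=
            add_le_add_right h3 _
        _ = ∫⁻ x, g x ∂μ := by rw [h1, add_comm]
    have hMS_ge : ∀ m x, ME m x ≤ MS x := by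
      intro m x
      rw [hMS]
      exact le_iSup (fun m => ME m x) m
    -- the finite-stage master inequality
    have hmain_fin : ∀ (s : Finset ι) (m : ℕ),
        ENNReal.ofReal (1 - q) * ∫⁻ x in (⋃ j, I j)ᶜ, ME m x ^ q ∂μ +
            ENNReal.ofReal q * ∫⁻ x in (⋃ j, I j)ᶜ, MS x ^ (q - 1) * Φ x ∂μ +
            ∑ j ∈ s, μ (I j) * yE j ^ q ≤
          ENNReal.ofReal (f ^ q) := by
      intro s m
      set m' := max m (s.sup Lf) with hm'
      have hm'm : m ≤ m' := le_max_left _ _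
      have hm'N : ∀ j ∈ s, Lf j ≤ m' := fun j hj =>
        (Finset.le_sup hj).trans (le_max_right _ _)
      have hA_le : ∫⁻ x in (⋃ j, I j)ᶜ, ME m x ^ q ∂μ ≤
          ∫⁻ x in (⋃ j, I j)ᶜ, ME m' x ^ q ∂μ :=
        lintegral_mono fun x => ENNReal.rpow_le_rpow (hME_mono hm'm x) hq0.le
      have hB_le : ∫⁻ x in (⋃ j, I j)ᶜ, MS x ^ (q - 1) * Φ x ∂μ ≤
          ∫⁻ x in (⋃ j, I j)ᶜ, ME m' x ^ (q - 1) * Φ x ∂μ :=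
        lintegral_mono fun x => mul_le_mul_left (S14.rpow_anti hq1 (hMS_ge m' x)) _
      have hfs : ∑ j ∈ s, μ (I j) * yE j ^ q ≤
          ∑ j ∈ s, (ENNReal.ofReal (1 - q) * ∫⁻ x in I j, ME m' x ^ q ∂μ +
            ENNReal.ofReal q * ∫⁻ x in I j, ME m' x ^ (q - 1) * Φ x ∂μ) :=
        Finset.sum_le_sum fun j hj => hfrozen_bound j m' (hm'N j hj)
      calc ENNReal.ofReal (1 - q) * ∫⁻ x in (⋃ j, I j)ᶜ, ME m x ^ q ∂μ +
            ENNReal.ofReal q * ∫⁻ x in (⋃ j, I j)ᶜ, MS x ^ (q - 1) * Φ x ∂μ +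
            ∑ j ∈ s, μ (I j) * yE j ^ q
          ≤ ENNReal.ofReal (1 - q) * ∫⁻ x in (⋃ j, I j)ᶜ, ME m' x ^ q ∂μ +
              ENNReal.ofReal q * ∫⁻ x in (⋃ j, I j)ᶜ, ME m' x ^ (q - 1) * Φ x ∂μ +
              ∑ j ∈ s, (ENNReal.ofReal (1 - q) * ∫⁻ x in I j, ME m' x ^ q ∂μ +
                ENNReal.ofReal q * ∫⁻ x in I j, ME m' x ^ (q - 1) * Φ x ∂μ) :=
            add_le_add (add_le_add (mul_le_mul_right hA_le _)
              (mul_le_mul_right hB_le _)) hfs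
        _ = ENNReal.ofReal (1 - q) * (∫⁻ x in (⋃ j, I j)ᶜ, ME m' x ^ q ∂μ +
              ∑ j ∈ s, ∫⁻ x in I j, ME m' x ^ q ∂μ) +
            ENNReal.ofReal q * (∫⁻ x in (⋃ j, I j)ᶜ, ME m' x ^ (q - 1) * Φ x ∂μ +
              ∑ j ∈ s, ∫⁻ x in I j, ME m' x ^ (q - 1) * Φ x ∂μ) := by
            simp only [Finset.sum_add_distrib, Finset.mul_sum, mul_add]
            ring
        _ ≤ ENNReal.ofReal (1 - q) * ∫⁻ x, ME m' x ^ q ∂μ +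
              ENNReal.ofReal q * ∫⁻ x, ME m' x ^ (q - 1) * Φ x ∂μ :=
            add_le_add (mul_le_mul_right (hdec s _) _) (mul_le_mul_right (hdec s _) _)
        _ ≤ ENNReal.ofReal (f ^ q) := hW_le m'
    -- pass to the supremum in `m`
    have hlsup : ∫⁻ x in (⋃ j, I j)ᶜ, MS x ^ q ∂μ =
        ⨆ m, ∫⁻ x in (⋃ j, I j)ᶜ, ME m x ^ q ∂μ := by
      have hpt : ∀ x, MS x ^ q = ⨆ m, ME m x ^ q := fun x => by
        rw [hMS]
        exact S14.iSup_rpow hq0 fun m => ME m x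
      rw [lintegral_congr hpt]
      exact lintegral_iSup (fun m => hrpow_meas _ q (hME_meas m))
        (fun m m' hmm' x => ENNReal.rpow_le_rpow (hME_mono hmm' x) hq0.le)
    have hsupm : ∀ s : Finset ι,
        ENNReal.ofReal (1 - q) * ∫⁻ x in (⋃ j, I j)ᶜ, MS x ^ q ∂μ +
            (ENNReal.ofReal q * ∫⁻ x in (⋃ j, I j)ᶜ, MS x ^ (q - 1) * Φ x ∂μ +
              ∑ j ∈ s, μ (I j) * yE j ^ q) ≤
          ENNReal.ofReal (f ^ q) := by
      intro s
      rw [hlsup, ENNReal.mul_iSup, ENNReal.iSup_add]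
      refine iSup_le fun m => ?_
      calc ENNReal.ofReal (1 - q) * ∫⁻ x in (⋃ j, I j)ᶜ, ME m x ^ q ∂μ +
            (ENNReal.ofReal q * ∫⁻ x in (⋃ j, I j)ᶜ, MS x ^ (q - 1) * Φ x ∂μ +
              ∑ j ∈ s, μ (I j) * yE j ^ q)
          = ENNReal.ofReal (1 - q) * ∫⁻ x in (⋃ j, I j)ᶜ, ME m x ^ q ∂μ +
              ENNReal.ofReal q * ∫⁻ x in (⋃ j, I j)ᶜ, MS x ^ (q - 1) * Φ x ∂μ +
              ∑ j ∈ s, μ (I j) * yE j ^ q := (add_assoc _ _ _).symm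
        _ ≤ ENNReal.ofReal (f ^ q) := hmain_fin s m
    have hdiamond :
        ENNReal.ofReal (1 - q) * ∫⁻ x in (⋃ j, I j)ᶜ, MS x ^ q ∂μ +
            (ENNReal.ofReal q * ∫⁻ x in (⋃ j, I j)ᶜ, MS x ^ (q - 1) * Φ x ∂μ +
              ∑' j, μ (I j) * yE j ^ q) ≤
          ENNReal.ofReal (f ^ q) := by
      rw [ENNReal.tsum_eq_iSup_sum, ENNReal.add_iSup, ENNReal.add_iSup]
      exact iSup_le fun s => hsupm s
    have hMS_meas : Measurable MS := by
      rw [hMS]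
      exact Measurable.iSup hME_meas
    -- on the complement nothing is frozen
    have hnofr : ∀ x ∈ (⋃ j, I j)ᶜ, ∀ m, S14.spc lvl I m x = S14.chn lvl m x := by
      intro x hx m
      apply S14.spc_unfrozen
      rintro ⟨⟨j, k⟩, hk, hc⟩
      exact hx (mem_iUnion.2 ⟨j, hc ▸ S14.mem_chn hlvl k x⟩)
    have havgE : ∀ K : Set X, K ∈ T.mem →
        (∫⁻ z in K, Φ z ∂μ) / μ K = ENNReal.ofReal (trAvg μ φ K) := by
      intro K hK
      have hi : IntegrableOn φ K μ := hint.integrableOn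
      have h1 : ∫⁻ z in K, Φ z ∂μ = ENNReal.ofReal (∫ z in K, φ z ∂μ) := by
        rw [hΦ]
        exact (MeasureTheory.ofReal_integral_eq_lintegral_ofReal hi
          (Filter.Eventually.of_forall h0)).symm
      have hμK : 0 < (μ K).toReal :=
        ENNReal.toReal_pos (T.pos _ hK).ne' (measure_ne_top μ K)
      rw [h1, trAvg]
      conv_lhs => rw [← ENNReal.ofReal_toReal (measure_ne_top μ K)]
      rw [← ENNReal.ofReal_div_of_pos hμK]
      congr 1
      rw [div_eq_inv_mul]
    have huE_ofReal : ∀ m x, uE m x = ENNReal.ofReal (trAvg μ φ (S14.spc lvl I m x)) := by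
      intro m x
      rw [huE]
      exact havgE _ (hpcmem m x)
    have htrMS : ∀ x ∈ (⋃ j, I j)ᶜ, trMax μ T φ x = (MS x).toReal := by
      intro x hx
      have hset : {r : ℝ | ∃ J ∈ T.mem, x ∈ J ∧ r = trAvg μ φ J} =
          Set.range fun m => trAvg μ φ (S14.chn lvl m x) := by
        ext r
        simp only [mem_setOf_eq, mem_range]
        constructor
        · rintro ⟨J, hJ, hxJ, rfl⟩
          obtain ⟨m, hm⟩ := S14.chn_of_mem hlvl hJ hxJ
          exact ⟨m, by rw [hm]⟩
        · rintro ⟨m, rfl⟩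
          exact ⟨S14.chn lvl m x, hlvl.sub_mem (S14.chn_mem_lvl hlvl m x),
            S14.mem_chn hlvl m x, rfl⟩
      have hMS_usup : MS x = ⨆ m, uE m x := by
        rw [hMS]
        apply le_antisymm
        · refine iSup_le fun m => ?_
          rw [hME]
          exact iSup_le fun k => iSup_le fun hk => le_iSup (fun k => uE k x) k
        · exact iSup_le fun m => le_iSup_of_le m (hle_ME le_rfl x)
      rw [htrMax x, hset, sSup_range, hMS_usup]
      have huEx : ∀ m, uE m x = ENNReal.ofReal (trAvg μ φ (S14.chn lvl m x)) := by
        intro m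
        rw [huE_ofReal, hnofr x hx m]
      simp only [huEx]
      exact (S14.toReal_iSup_ofReal fun m => htrAvg_nn _).symm
    -- pointwise comparison on the complement
    have hT2 : ∀ x ∈ (⋃ j, I j)ᶜ,
        ENNReal.ofReal ((1 - q) * β) * ENNReal.ofReal (trMax μ T φ x ^ q) +
            ENNReal.ofReal ((β + 1) ^ q) * ENNReal.ofReal (φ x ^ q) ≤
          ENNReal.ofReal (β + 1) *
            (ENNReal.ofReal (1 - q) * MS x ^ q +
              ENNReal.ofReal q * (MS x ^ (q - 1) * Φ x)) := by
      intro x hx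
      have hb1 : (0:ℝ) < β + 1 := by linarith
      rcases eq_or_ne (MS x) ∞ with hMSt | hMSfin
      · have h1 : ENNReal.ofReal (1 - q) ≠ 0 := by
          simp only [ne_eq, ENNReal.ofReal_eq_zero, not_le]; linarith
        have h2 : ENNReal.ofReal (β + 1) ≠ 0 := by
          simp only [ne_eq, ENNReal.ofReal_eq_zero, not_le]; linarith
        rw [hMSt, ENNReal.top_rpow_of_pos hq0, ENNReal.mul_top h1, top_add,
          ENNReal.mul_top h2]
        exact le_top
      · have hmR := htrMS x hx
        have hMS_eq : MS x = ENNReal.ofReal (MS x).toReal :=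
          (ENNReal.ofReal_toReal hMSfin).symm
        have hfle : f ≤ (MS x).toReal := by
          have hle : ENNReal.ofReal f ≤ MS x := by
            calc ENNReal.ofReal f = ME 0 x := ((hME0 x).trans (huniv_eq x)).symm
              _ ≤ MS x := hMS_ge 0 x
          have h2 := ENNReal.toReal_mono hMSfin hle
          rwa [ENNReal.toReal_ofReal hfnn] at h2
        have hmpos : 0 < (MS x).toReal := lt_of_lt_of_le hfpos hfle
        have hR : ENNReal.ofReal (1 - q) * MS x ^ q +
            ENNReal.ofReal q * (MS x ^ (q - 1) * Φ x) =
            ENNReal.ofReal ((1 - q) * (MS x).toReal ^ q +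
              q * ((MS x).toReal ^ (q - 1) * φ x)) := by
          simp only [hΦ]
          conv_lhs => rw [hMS_eq]
          rw [ENNReal.ofReal_rpow_of_pos hmpos, ENNReal.ofReal_rpow_of_pos hmpos,
            ← ENNReal.ofReal_mul (Real.rpow_nonneg ENNReal.toReal_nonneg _),
            ← ENNReal.ofReal_mul (by linarith : (0:ℝ) ≤ 1 - q),
            ← ENNReal.ofReal_mul hq0.le,
            ← ENNReal.ofReal_add
              (mul_nonneg (by linarith) (Real.rpow_nonneg ENNReal.toReal_nonneg q))
              (mul_nonneg hq0.le (mul_nonneg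
                (Real.rpow_nonneg ENNReal.toReal_nonneg _) (h0 x)))]
        rw [hR,
          ← ENNReal.ofReal_mul (by linarith : (0:ℝ) ≤ β + 1),
          ← ENNReal.ofReal_mul (mul_nonneg (by linarith : (0:ℝ) ≤ 1 - q) hβ.le),
          ← ENNReal.ofReal_mul (Real.rpow_nonneg hb1.le q),
          ← ENNReal.ofReal_add
            (mul_nonneg (mul_nonneg (by linarith) hβ.le)
              (Real.rpow_nonneg (hmR ▸ ENNReal.toReal_nonneg) q))
            (mul_nonneg (Real.rpow_nonneg hb1.le q) (Real.rpow_nonneg (h0 x) q))]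
        apply ENNReal.ofReal_le_ofReal
        rw [hmR]
        have htan := S14.tangent_real hq0 hq1 (mul_nonneg hb1.le (h0 x)) hmpos
        have hmul : ((β + 1) * φ x) ^ q = (β + 1) ^ q * φ x ^ q :=
          Real.mul_rpow hb1.le (h0 x)
        rw [hmul] at htan
        nlinarith [htan]
    -- integrating the comparison
    have hmk_meas : Measurable fun x => ENNReal.ofReal ((MS x).toReal ^ q) :=
      ((hMS_meas.ennreal_toReal).pow measurable_const).ennreal_ofReal
    have haem : AEMeasurable (fun x => ENNReal.ofReal (trMax μ T φ x ^ q))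
        (μ.restrict (⋃ j, I j)ᶜ) := by
      refine ⟨fun x => ENNReal.ofReal ((MS x).toReal ^ q), hmk_meas, ?_⟩
      filter_upwards [ae_restrict_mem hEcmeas] with x hx
      rw [htrMS x hx]
    have hint2 :
        ENNReal.ofReal ((1 - q) * β) *
            ∫⁻ x in (⋃ j, I j)ᶜ, ENNReal.ofReal (trMax μ T φ x ^ q) ∂μ +
          ENNReal.ofReal ((β + 1) ^ q) *
            ∫⁻ x in (⋃ j, I j)ᶜ, ENNReal.ofReal (φ x ^ q) ∂μ ≤
          ENNReal.ofReal (β + 1) *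
            (ENNReal.ofReal (1 - q) * ∫⁻ x in (⋃ j, I j)ᶜ, MS x ^ q ∂μ +
              ENNReal.ofReal q * ∫⁻ x in (⋃ j, I j)ᶜ, MS x ^ (q - 1) * Φ x ∂μ) := by
      rw [← lintegral_const_mul' _ _ ENNReal.ofReal_ne_top,
        ← lintegral_const_mul' _ _ ENNReal.ofReal_ne_top,
        ← lintegral_add_left' (haem.const_mul _)]
      have hmono : ∫⁻ x in (⋃ j, I j)ᶜ,
          (ENNReal.ofReal ((1 - q) * β) * ENNReal.ofReal (trMax μ T φ x ^ q) +
            ENNReal.ofReal ((β + 1) ^ q) * ENNReal.ofReal (φ x ^ q)) ∂μ ≤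
          ∫⁻ x in (⋃ j, I j)ᶜ,
            (ENNReal.ofReal (β + 1) *
              (ENNReal.ofReal (1 - q) * MS x ^ q +
                ENNReal.ofReal q * (MS x ^ (q - 1) * Φ x))) ∂μ := by
        apply lintegral_mono_ae
        filter_upwards [ae_restrict_mem hEcmeas] with x hx
        exact hT2 x hx
      refine hmono.trans (le_of_eq ?_)
      rw [lintegral_const_mul' _ _ ENNReal.ofReal_ne_top]
      congr 1
      rw [lintegral_add_left ((hrpow_meas _ q hMS_meas).const_mul _),
        lintegral_const_mul' _ _ ENNReal.ofReal_ne_top,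
        lintegral_const_mul' _ _ ENNReal.ofReal_ne_top]
    have hfinal :
        ENNReal.ofReal ((1 - q) * β) *
            ∫⁻ x in (⋃ j, I j)ᶜ, ENNReal.ofReal (trMax μ T φ x ^ q) ∂μ +
          ENNReal.ofReal ((β + 1) ^ q) *
            ∫⁻ x in (⋃ j, I j)ᶜ, ENNReal.ofReal (φ x ^ q) ∂μ +
          ENNReal.ofReal (β + 1) * ∑' j, μ (I j) * yE j ^ q ≤
          ENNReal.ofReal (β + 1) * ENNReal.ofReal (f ^ q) := by
      calc ENNReal.ofReal ((1 - q) * β) *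
            ∫⁻ x in (⋃ j, I j)ᶜ, ENNReal.ofReal (trMax μ T φ x ^ q) ∂μ +
          ENNReal.ofReal ((β + 1) ^ q) *
            ∫⁻ x in (⋃ j, I j)ᶜ, ENNReal.ofReal (φ x ^ q) ∂μ +
          ENNReal.ofReal (β + 1) * ∑' j, μ (I j) * yE j ^ q
          ≤ ENNReal.ofReal (β + 1) *
              (ENNReal.ofReal (1 - q) * ∫⁻ x in (⋃ j, I j)ᶜ, MS x ^ q ∂μ +
                ENNReal.ofReal q * ∫⁻ x in (⋃ j, I j)ᶜ, MS x ^ (q - 1) * Φ x ∂μ) +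
              ENNReal.ofReal (β + 1) * ∑' j, μ (I j) * yE j ^ q :=
            add_le_add_left hint2 _
        _ = ENNReal.ofReal (β + 1) *
              (ENNReal.ofReal (1 - q) * ∫⁻ x in (⋃ j, I j)ᶜ, MS x ^ q ∂μ +
                (ENNReal.ofReal q * ∫⁻ x in (⋃ j, I j)ᶜ, MS x ^ (q - 1) * Φ x ∂μ +
                  ∑' j, μ (I j) * yE j ^ q)) := by
            rw [← mul_add, add_assoc]
        _ ≤ ENNReal.ofReal (β + 1) * ENNReal.ofReal (f ^ q) :=
            mul_le_mul_right hdiamond _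
    -- finiteness of the pieces
    have hRfin : ENNReal.ofReal (β + 1) * ENNReal.ofReal (f ^ q) ≠ ∞ :=
      ENNReal.mul_ne_top ENNReal.ofReal_ne_top ENNReal.ofReal_ne_top
    have hc1ne : ENNReal.ofReal ((1 - q) * β) ≠ 0 := by
      simp only [ne_eq, ENNReal.ofReal_eq_zero, not_le]
      exact mul_pos (by linarith) hβ
    have hc2ne : ENNReal.ofReal ((β + 1) ^ q) ≠ 0 := by
      simp only [ne_eq, ENNReal.ofReal_eq_zero, not_le]
      exact Real.rpow_pos_of_pos (by linarith) q
    have hc3ne : ENNReal.ofReal (β + 1) ≠ 0 := by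
      simp only [ne_eq, ENNReal.ofReal_eq_zero, not_le]; linarith
    have hLAfin : (∫⁻ x in (⋃ j, I j)ᶜ, ENNReal.ofReal (trMax μ T φ x ^ q) ∂μ) ≠ ∞ := by
      intro h
      have h1 : ENNReal.ofReal ((1 - q) * β) *
          ∫⁻ x in (⋃ j, I j)ᶜ, ENNReal.ofReal (trMax μ T φ x ^ q) ∂μ ≤
          ENNReal.ofReal (β + 1) * ENNReal.ofReal (f ^ q) :=
        le_trans (le_self_add.trans le_self_add) hfinal
      rw [h, ENNReal.mul_top hc1ne] at h1
      exact hRfin (top_le_iff.1 h1)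
    have hLBfin : (∫⁻ x in (⋃ j, I j)ᶜ, ENNReal.ofReal (φ x ^ q) ∂μ) ≠ ∞ := by
      intro h
      have h1 : ENNReal.ofReal ((β + 1) ^ q) *
          ∫⁻ x in (⋃ j, I j)ᶜ, ENNReal.ofReal (φ x ^ q) ∂μ ≤
          ENNReal.ofReal (β + 1) * ENNReal.ofReal (f ^ q) :=
        le_trans (le_add_self.trans le_self_add) hfinal
      rw [h, ENNReal.mul_top hc2ne] at h1
      exact hRfin (top_le_iff.1 h1)
    have hSEfin : (∑' j, μ (I j) * yE j ^ q) ≠ ∞ := by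
      intro h
      have h1 : ENNReal.ofReal (β + 1) * ∑' j, μ (I j) * yE j ^ q ≤
          ENNReal.ofReal (β + 1) * ENNReal.ofReal (f ^ q) :=
        le_trans le_add_self hfinal
      rw [h, ENNReal.mul_top hc3ne] at h1
      exact hRfin (top_le_iff.1 h1)
    -- identification of the real integrals
    have hA_eq : (∫ x in (⋃ j, I j)ᶜ, trMax μ T φ x ^ q ∂μ) =
        (∫⁻ x in (⋃ j, I j)ᶜ, ENNReal.ofReal (trMax μ T φ x ^ q) ∂μ).toReal := by
      have hnn : 0 ≤ᵐ[μ.restrict (⋃ j, I j)ᶜ] fun x => trMax μ T φ x ^ q := by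
        filter_upwards [ae_restrict_mem hEcmeas] with x hx
        rw [htrMS x hx]
        exact Real.rpow_nonneg ENNReal.toReal_nonneg q
      have hmr : Measurable fun x => ((MS x).toReal) ^ q :=
        (hMS_meas.ennreal_toReal).pow measurable_const
      have hsm : AEStronglyMeasurable (fun x => trMax μ T φ x ^ q)
          (μ.restrict (⋃ j, I j)ᶜ) := by
        refine hmr.aestronglyMeasurable.congr ?_
        filter_upwards [ae_restrict_mem hEcmeas] with x hx
        rw [htrMS x hx]
      rw [MeasureTheory.integral_eq_lintegral_of_nonneg_ae hnn hsm]
    have hB_eq : (∫ x in (⋃ j, I j)ᶜ, φ x ^ q ∂μ) =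
        (∫⁻ x in (⋃ j, I j)ᶜ, ENNReal.ofReal (φ x ^ q) ∂μ).toReal := by
      have hnn : 0 ≤ᵐ[μ.restrict (⋃ j, I j)ᶜ] fun x => φ x ^ q :=
        Filter.Eventually.of_forall fun x => Real.rpow_nonneg (h0 x) q
      obtain ⟨ψ, hψm, hψe⟩ :=
        (hint.aestronglyMeasurable.restrict (s := (⋃ j, I j)ᶜ)).aemeasurable
      have hmr : Measurable fun x => ψ x ^ q := hψm.pow measurable_const
      have hsm : AEStronglyMeasurable (fun x => φ x ^ q)
          (μ.restrict (⋃ j, I j)ᶜ) := by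
        refine hmr.aestronglyMeasurable.congr ?_
        filter_upwards [hψe] with x hx
        rw [hx]
      rw [MeasureTheory.integral_eq_lintegral_of_nonneg_ae hnn hsm]
    have hS_eq : (∑' j, (μ (I j)).toReal * trAvg μ φ (I j) ^ q) =
        (∑' j, μ (I j) * yE j ^ q).toReal := by
      have hterm : ∀ j, μ (I j) * yE j ^ q =
          ENNReal.ofReal ((μ (I j)).toReal * trAvg μ φ (I j) ^ q) := by
        intro j
        have hy : yE j = ENNReal.ofReal (trAvg μ φ (I j)) := by
          rw [hyE]
          exact havgE _ (hImem j)
        rw [hy, ENNReal.ofReal_rpow_of_nonneg (htrAvg_nn _) hq0.le,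
          ENNReal.ofReal_mul ENNReal.toReal_nonneg,
          ENNReal.ofReal_toReal (measure_ne_top μ _)]
      calc (∑' j, (μ (I j)).toReal * trAvg μ φ (I j) ^ q)
          = ∑' j, (ENNReal.ofReal ((μ (I j)).toReal * trAvg μ φ (I j) ^ q)).toReal :=
            tsum_congr fun j => (ENNReal.toReal_ofReal (mul_nonneg
              ENNReal.toReal_nonneg (Real.rpow_nonneg (htrAvg_nn _) q))).symm
        _ = (∑' j, ENNReal.ofReal ((μ (I j)).toReal * trAvg μ φ (I j) ^ q)).toReal :=
            (ENNReal.tsum_toReal_eq fun j => ENNReal.ofReal_ne_top).symm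
        _ = (∑' j, μ (I j) * yE j ^ q).toReal := by
            congr 1
            exact (tsum_congr hterm).symm
    -- pass to the reals
    have ht1fin : ENNReal.ofReal ((1 - q) * β) *
        (∫⁻ x in (⋃ j, I j)ᶜ, ENNReal.ofReal (trMax μ T φ x ^ q) ∂μ) ≠ ∞ :=
      ENNReal.mul_ne_top ENNReal.ofReal_ne_top hLAfin
    have ht2fin : ENNReal.ofReal ((β + 1) ^ q) *
        (∫⁻ x in (⋃ j, I j)ᶜ, ENNReal.ofReal (φ x ^ q) ∂μ) ≠ ∞ :=
      ENNReal.mul_ne_top ENNReal.ofReal_ne_top hLBfin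
    have ht3fin : ENNReal.ofReal (β + 1) * (∑' j, μ (I j) * yE j ^ q) ≠ ∞ :=
      ENNReal.mul_ne_top ENNReal.ofReal_ne_top hSEfin
    have hreal := ENNReal.toReal_mono hRfin hfinal
    rw [ENNReal.toReal_add (ENNReal.add_ne_top.2 ⟨ht1fin, ht2fin⟩) ht3fin,
      ENNReal.toReal_add ht1fin ht2fin] at hreal
    simp only [ENNReal.toReal_mul] at hreal
    rw [ENNReal.toReal_ofReal (mul_nonneg (by linarith : (0:ℝ) ≤ 1 - q) hβ.le),
      ENNReal.toReal_ofReal (Real.rpow_nonneg (by linarith : (0:ℝ) ≤ β + 1) q),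
      ENNReal.toReal_ofReal (by linarith : (0:ℝ) ≤ β + 1),
      ENNReal.toReal_ofReal (Real.rpow_nonneg hfnn q)] at hreal
    rw [hA_eq, hB_eq, hS_eq]
    rw [one_div, inv_mul_eq_div,
      le_div_iff₀ (mul_pos (by linarith : (0:ℝ) < 1 - q) hβ)]
    nlinarith [hreal]


end
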